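/- Let W be a weight module for H̃ with finite-dimensional weight spaces, h ∈ H with (h,h)=1, and set e = (h t_1)(h t_1^{-1}) and f = (h t_2)(h t_2^{-1}) as operators on W. Then e and f preserve each weight space of W, and every monomial vector h_1 t_1^{a_1} t_2^{b_1} ⋯ h_n t_1^{a_n} t_2^{b_n} v built from a common eigenvector v of e and f is again a common eigenvector of e and f. -/

import Mathlib

noncomputable section

/-- Abstract presentation of the rank-2 Heisenberg-type Lie algebra
`H̃ = H ⊗ ℂ[t₁^{±1}, t₂^{±1}] ⊕ ℂC₁ ⊕ ℂC₂ ⊕ ℂd₁ ⊕ ℂd₂`. -/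
structure HeisAlg (H : Type*) [AddCommGroup H] [Module ℂ H]
    (B : H →ₗ[ℂ] H →ₗ[ℂ] ℂ) (L : Type*) [LieRing L] [LieAlgebra ℂ L] where
  E : (Fin 2 → ℤ) → H →ₗ[ℂ] L
  C : Fin 2 → L
  d : Fin 2 → L
  bracket_EE : ∀ (r s : Fin 2 → ℤ) (h₁ h₂ : H),
    ⁅E r h₁, E s h₂⁆ =
      if r + s = 0 then ∑ i : Fin 2, (B h₁ h₂ * (r i : ℂ)) • C i else 0
  C_central : ∀ (i : Fin 2) (y : L), ⁅C i, y⁆ = 0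
  bracket_dE : ∀ (i : Fin 2) (r : Fin 2 → ℤ) (h : H), ⁅d i, E r h⁆ = (r i : ℂ) • E r h
  bracket_dd : ∀ i j : Fin 2, ⁅d i, d j⁆ = 0
  spanning : Submodule.span ℂ
      ((⋃ r : Fin 2 → ℤ, Set.range (E r)) ∪ Set.range C ∪ Set.range d) = ⊤

variable {H : Type*} [AddCommGroup H] [Module ℂ H]
  {B : H →ₗ[ℂ] H →ₗ[ℂ] ℂ} {L : Type*} [LieRing L] [LieAlgebra ℂ L]

/-- The Cartan subalgebra `h = H ⊕ ℂC₁ ⊕ ℂC₂ ⊕ ℂd₁ ⊕ ℂd₂`, as a set. -/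
def HeisAlg.cartanSet (D : HeisAlg H B L) : Set L :=
  Set.range (D.E 0) ∪ Set.range D.C ∪ Set.range D.d

/-- Weight space of an `H̃`-module for a weight `χ` with respect to `h`. -/
def HeisAlg.wtSp (D : HeisAlg H B L)
    (W : Type*) [AddCommGroup W] [Module ℂ W] [LieRingModule L W] [LieModule ℂ L W]
    (χ : L → ℂ) : Submodule ℂ W :=
  ⨅ x ∈ D.cartanSet, Module.End.eigenspace (LieModule.toEnd ℂ L W x) (χ x)


variable (D : HeisAlg H B L)
  (W : Type*) [AddCommGroup W] [Module ℂ W] [LieRingModule L W] [LieModule ℂ L W]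

/-- The operator `e = (h t₁)(h t₁⁻¹)` on `W`. -/
def HeisAlg.eOp (h : H) : Module.End ℂ W :=
  (LieModule.toEnd ℂ L W (D.E (Pi.single 0 1) h)).comp
    (LieModule.toEnd ℂ L W (D.E (-Pi.single 0 1) h))

/-- The operator `f = (h t₂)(h t₂⁻¹)` on `W`. -/
def HeisAlg.fOp (h : H) : Module.End ℂ W :=
  (LieModule.toEnd ℂ L W (D.E (Pi.single 1 1) h)).comp
    (LieModule.toEnd ℂ L W (D.E (-Pi.single 1 1) h))



open Module in
/-- A commuting family of endomorphisms of a nonzero f.d. complex vector space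
has a simultaneous eigenvector. -/
theorem S9.common_eigenvector {V : Type*} [AddCommGroup V] [Module ℂ V]
    [FiniteDimensional ℂ V] [Nontrivial V] {ι : Type*} (f : ι → Module.End ℂ V)
    (hcomm : ∀ i j, ∀ x : V, f i (f j x) = f j (f i x)) :
    ∃ v : V, v ≠ 0 ∧ ∀ i, ∃ c : ℂ, f i v = c • v := by
  suffices h : ∀ n : ℕ, ∀ p : Submodule ℂ V, p ≠ ⊥ → (∀ i, ∀ x ∈ p, f i x ∈ p) →
      Module.finrank ℂ p ≤ n → ∃ v ∈ p, v ≠ 0 ∧ ∀ i, ∃ c : ℂ, f i v = c • v by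
    obtain ⟨v, _, hv⟩ := h (Module.finrank ℂ (⊤ : Submodule ℂ V)) ⊤
      (by intro hbot; exact not_subsingleton V (by
        constructor; intro a b
        have ha : a ∈ (⊤ : Submodule ℂ V) := Submodule.mem_top
        have hb : b ∈ (⊤ : Submodule ℂ V) := Submodule.mem_top
        rw [hbot, Submodule.mem_bot] at ha hb; rw [ha, hb])) (fun i x _ => Submodule.mem_top) le_rfl
    exact ⟨v, hv⟩
  intro n
  induction n with
  | zero =>
    intro p hp hinv hrank
    exfalso
    exact hp (Submodule.finrank_eq_zero.mp (Nat.le_zero.mp hrank))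
  | succ n ih =>
    intro p hp hinv hrank
    by_cases hsc : ∀ i, ∃ c : ℂ, ∀ x ∈ p, f i x = c • x
    · obtain ⟨v, hv, hvne⟩ := Submodule.exists_mem_ne_zero_of_ne_bot hp
      exact ⟨v, hv, hvne, fun i => (hsc i).imp fun c hc => hc v hv⟩
    · push_neg at hsc
      obtain ⟨i₀, hi₀⟩ := hsc
      -- restriction of f i₀ to p
      have hmaps : ∀ x ∈ p, f i₀ x ∈ p := hinv i₀
      have : Nontrivial p := Submodule.nontrivial_iff_ne_bot.mpr hp
      obtain ⟨μ, hμ⟩ := Module.End.exists_eigenvalue ((f i₀).restrict hmaps)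
      obtain ⟨⟨x, hx⟩, hxeig⟩ := hμ.exists_hasEigenvector
      have hxne : x ≠ 0 := fun hz => hxeig.2 (Subtype.ext hz)
      have heq : f i₀ x = μ • x := by
        have := congrArg (Subtype.val) hxeig.apply_eq_smul
        simpa [LinearMap.restrict_apply] using this
      by_cases hqp : p ≤ Module.End.eigenspace (f i₀) μ
      · exfalso
        obtain ⟨z, hz, hzne⟩ := hi₀ μ
        exact hzne (Module.End.mem_eigenspace_iff.mp (hqp hz))
      have hqne : p ⊓ Module.End.eigenspace (f i₀) μ ≠ ⊥ := by
        intro hbot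
        apply hxne
        have hxq : x ∈ p ⊓ Module.End.eigenspace (f i₀) μ := Submodule.mem_inf.mpr
          ⟨hx, Module.End.mem_eigenspace_iff.mpr heq⟩
        rw [hbot, Submodule.mem_bot] at hxq
        exact hxq
      have hqinv : ∀ i, ∀ y ∈ p ⊓ Module.End.eigenspace (f i₀) μ,
          f i y ∈ p ⊓ Module.End.eigenspace (f i₀) μ := by
        intro i y hy
        obtain ⟨hy1, hy2⟩ := Submodule.mem_inf.mp hy
        refine Submodule.mem_inf.mpr ⟨hinv i y hy1, ?_⟩
        rw [Module.End.mem_eigenspace_iff] at hy2 ⊢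
        rw [show (f i₀) ((f i) y) = (f i) ((f i₀) y) from (hcomm i i₀ y).symm, hy2, map_smul]
      have hqlt : p ⊓ Module.End.eigenspace (f i₀) μ < p := by
        refine lt_of_le_of_ne inf_le_left fun hcontra => hqp ?_
        intro z hz
        exact (Submodule.mem_inf.mp (hcontra.symm ▸ hz :
          z ∈ p ⊓ Module.End.eigenspace (f i₀) μ)).2
      have : Module.finrank ℂ (p ⊓ Module.End.eigenspace (f i₀) μ : Submodule ℂ V) <
          Module.finrank ℂ p := Submodule.finrank_lt_finrank_of_lt hqlt
      obtain ⟨v, hvq, hvne, hveig⟩ := ih _ hqne hqinv (by omega)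
      exact ⟨v, (inf_le_left : p ⊓ Module.End.eigenspace (f i₀) μ ≤ p) hvq, hvne, hveig⟩

/-- Nonzero simultaneous eigenvectors with pairwise distinct eigenvalue tuples
are linearly independent. -/
theorem S9.eigen_linearIndependent {V ι K : Type*} [AddCommGroup V] [Module ℂ V]
    [DecidableEq ι] (f : K → Module.End ℂ V) (v : ι → V) (lam : ι → K → ℂ)
    (hv : ∀ i, v i ≠ 0) (hf : ∀ i k, f k (v i) = lam i k • v i)
    (hsep : ∀ i j, i ≠ j → ∃ k, lam i k ≠ lam j k) :
    LinearIndependent ℂ v := by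
  rw [linearIndependent_iff']
  intro s
  induction s using Finset.strongInduction with
  | _ s ih =>
    intro g hsum i hi
    by_cases hex : ∃ j ∈ s, j ≠ i
    · obtain ⟨j, hj, hjne⟩ := hex
      obtain ⟨k, hk⟩ := hsep i j (Ne.symm hjne)
      have h2 : ∑ i' ∈ s, (g i' * (lam i' k - lam j k)) • v i' = 0 := by
        have hA : f k (∑ i' ∈ s, g i' • v i') = 0 := by rw [hsum, map_zero]
        rw [map_sum] at hA
        simp only [map_smul, hf] at hA
        have hB : ∑ i' ∈ s, (lam j k) • (g i' • v i') = 0 := by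
          rw [← Finset.smul_sum, hsum, smul_zero]
        calc ∑ i' ∈ s, (g i' * (lam i' k - lam j k)) • v i'
            = ∑ i' ∈ s, (g i' • (lam i' k • v i') - lam j k • (g i' • v i')) := by
              refine Finset.sum_congr rfl fun i' _ => ?_
              rw [smul_smul, smul_smul, ← sub_smul]
              congr 1
              ring
          _ = 0 := by rw [Finset.sum_sub_distrib, hA, hB, sub_zero]
      have h3 : ∑ i' ∈ s.erase j, (g i' * (lam i' k - lam j k)) • v i' = 0 := by
        rw [Finset.sum_erase s (by simp)]
        exact h2
      have h4 := ih (s.erase j) (Finset.erase_ssubset hj) _ h3 i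
        (Finset.mem_erase.mpr ⟨Ne.symm hjne, hi⟩)
      rcases mul_eq_zero.mp h4 with h | h
      · exact h
      · exact absurd (sub_eq_zero.mp h) hk
    · push_neg at hex
      have hs : s = {i} := by
        apply Finset.eq_singleton_iff_unique_mem.mpr
        exact ⟨hi, fun j hj => hex j hj⟩
      rw [hs, Finset.sum_singleton] at hsum
      rcases smul_eq_zero.mp hsum with h | h
      · exact h
      · exact absurd h (hv i)




/-- 1-D spreading lemma: if every integer except possibly `x₀` is in `P` or has its
negation in `Q`, then either there is a "close pair", or `P` is almost everything,
or `Q` is almost everything. -/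
theorem spread_lemma (P Q : Set ℤ) (x₀ : ℤ)
    (hcov : ∀ x : ℤ, x ≠ x₀ → x ∈ P ∨ (-x) ∈ Q) :
    (∃ x y : ℤ, x ∈ P ∧ y ∈ Q ∧ (x + y = 1 ∨ x + y = 2 ∨ x + y = -1 ∨ x + y = -2)) ∨
    (∀ x : ℤ, x ≠ x₀ → x ∈ P) ∨ (∀ y : ℤ, y ≠ -x₀ → y ∈ Q) := by
  by_cases hpair : ∃ x y : ℤ, x ∈ P ∧ y ∈ Q ∧
      (x + y = 1 ∨ x + y = 2 ∨ x + y = -1 ∨ x + y = -2)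
  · exact Or.inl hpair
  push_neg at hpair
  by_cases hP : ∃ x₁, x₁ ∈ P
  · obtain ⟨x₁, hx₁⟩ := hP
    -- from any point of P, all nearby points (≠ x₀) are in P
    have step : ∀ x ∈ P, ∀ e : ℤ, (e = 1 ∨ e = 2 ∨ e = -1 ∨ e = -2) →
        x + e ≠ x₀ → x + e ∈ P := by
      intro x hx e he hne
      rcases hcov (x + e) hne with h | h
      · exact h
      · exfalso
        have := hpair x (-(x + e)) hx h
        omega
    -- going up:  ∀ n : ℕ, x₁ + n = x₀ ∨ x₁ + n ∈ P
    have up : ∀ n : ℕ, (x₁ + n = x₀ ∨ x₁ + n ∈ P) := by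
      intro n
      induction n using Nat.strong_induction_on with
      | _ n ih =>
        match n, ih with
        | 0, _ => by_cases h : x₁ = x₀ <;> simp [h, hx₁]
        | 1, ih =>
          by_cases h : x₁ + 1 = x₀
          · exact Or.inl (by exact_mod_cast h)
          · exact Or.inr (by
              have := step x₁ hx₁ 1 (by tauto) (by exact_mod_cast h)
              simpa using this)
        | (m+2), ih =>
          by_cases h : x₁ + (↑(m+2) : ℤ) = x₀
          · exact Or.inl h
          · rcases ih (m+1) (by omega) with h1 | h1
            · -- x₁ + (m+1) = x₀, so use x₁ + m which is in P (≠ x₀) and step +2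
              rcases ih m (by omega) with h2 | h2
              · omega
              · refine Or.inr ?_
                have := step _ h2 2 (by tauto) (by push_cast at h ⊢; omega)
                have hh : x₁ + (↑m : ℤ) + 2 = x₁ + (↑(m + 2) : ℤ) := by push_cast; ring
                rwa [hh] at this
            · refine Or.inr ?_
              have := step _ h1 1 (by tauto) (by push_cast at h ⊢; omega)
              have hh : x₁ + (↑(m+1) : ℤ) + 1 = x₁ + (↑(m + 2) : ℤ) := by push_cast; ring
              rwa [hh] at this
    have down : ∀ n : ℕ, (x₁ - n = x₀ ∨ x₁ - n ∈ P) := by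
      intro n
      induction n using Nat.strong_induction_on with
      | _ n ih =>
        match n, ih with
        | 0, _ => by_cases h : x₁ = x₀ <;> simp [h, hx₁]
        | 1, ih =>
          by_cases h : x₁ - 1 = x₀
          · exact Or.inl (by exact_mod_cast h)
          · exact Or.inr (by
              have := step x₁ hx₁ (-1) (by tauto) (by push_cast; omega)
              have hh : x₁ + (-1) = x₁ - ((1:ℕ):ℤ) := by push_cast; ring
              rwa [hh] at this)
        | (m+2), ih =>
          by_cases h : x₁ - (↑(m+2) : ℤ) = x₀
          · exact Or.inl h
          · rcases ih (m+1) (by omega) with h1 | h1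
            · rcases ih m (by omega) with h2 | h2
              · omega
              · refine Or.inr ?_
                have := step _ h2 (-2) (by tauto) (by push_cast at h ⊢; omega)
                have hh : x₁ - (↑m : ℤ) + (-2) = x₁ - (↑(m + 2) : ℤ) := by push_cast; ring
                rwa [hh] at this
            · refine Or.inr ?_
              have := step _ h1 (-1) (by tauto) (by push_cast at h ⊢; omega)
              have hh : x₁ - (↑(m+1) : ℤ) + (-1) = x₁ - (↑(m + 2) : ℤ) := by push_cast; ring
              rwa [hh] at this
    refine Or.inr (Or.inl fun x hx => ?_)
    rcases le_or_gt x₁ x with hle | hlt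
    · have := up (x - x₁).toNat
      rw [Int.toNat_of_nonneg (by omega)] at this
      rcases this with h | h
      · omega
      · simpa [show x₁ + (x - x₁) = x by ring] using h
    · have := down (x₁ - x).toNat
      rw [Int.toNat_of_nonneg (by omega)] at this
      rcases this with h | h
      · omega
      · simpa [show x₁ - (x₁ - x) = x by ring] using h
  · push_neg at hP
    refine Or.inr (Or.inr fun y hy => ?_)
    rcases hcov (-y) (by omega) with h | h
    · exact absurd h (hP _)
    · simpa using h

/-- Pigeonhole: a function on `[1, ∞)` taking one of four values has an
infinite fiber. -/
theorem pigeon4 (σ : ℤ → ℤ) (hσ : ∀ n : ℤ, 1 ≤ n → σ n = 1 ∨ σ n = 2 ∨ σ n = -1 ∨ σ n = -2) :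
    ∃ s : ℤ, s ≠ 0 ∧ {n : ℤ | 1 ≤ n ∧ σ n = s}.Infinite := by
  by_contra hcon
  push_neg at hcon
  have h1 : ∀ s : ℤ, s ≠ 0 → {n : ℤ | 1 ≤ n ∧ σ n = s}.Finite := by
    intro s hs
    rcases Set.finite_or_infinite {n : ℤ | 1 ≤ n ∧ σ n = s} with h | h
    · exact h
    · exact absurd h (Set.not_infinite.mpr (hcon s hs))
  have hsub : Set.Ici (1:ℤ) ⊆ {n : ℤ | 1 ≤ n ∧ σ n = 1} ∪ {n : ℤ | 1 ≤ n ∧ σ n = 2} ∪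
      {n : ℤ | 1 ≤ n ∧ σ n = -1} ∪ {n : ℤ | 1 ≤ n ∧ σ n = -2} := by
    intro n hn
    have := hσ n hn
    simp only [Set.mem_union, Set.mem_setOf_eq]
    rcases this with h | h | h | h <;> simp [Set.mem_Ici.mp hn, h]
  have : (Set.Ici (1:ℤ)).Finite :=
    Set.Finite.subset ((((h1 1 (by norm_num)).union (h1 2 (by norm_num))).union
      (h1 (-1) (by norm_num))).union (h1 (-2) (by norm_num))) hsub
  exact (Set.Ici_infinite _) this


namespace S9

section Machine

variable {H : Type*} [AddCommGroup H] [Module ℂ H]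
  {B : H →ₗ[ℂ] H →ₗ[ℂ] ℂ} {L : Type*} [LieRing L] [LieAlgebra ℂ L]
  {W : Type*} [AddCommGroup W] [Module ℂ W] [LieRingModule L W] [LieModule ℂ L W]

local notation "TE" => LieModule.toEnd ℂ L W

lemma te_comm (x y : L) (w : W) : TE x (TE y w) = TE y (TE x w) + TE ⁅x, y⁆ w := by
  simp only [LieModule.toEnd_apply_apply]
  rw [lie_lie]
  abel

lemma te_zero (w : W) : TE (0 : L) w = 0 := by
  simp only [LieModule.toEnd_apply_apply, zero_lie]

lemma te_smulL (c : ℂ) (x : L) (w : W) : TE (c • x) w = c • TE x w := by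
  simp only [LieModule.toEnd_apply_apply, smul_lie]

lemma te_addL (x y : L) (w : W) : TE (x + y) w = TE x w + TE y w := by
  simp only [LieModule.toEnd_apply_apply, add_lie]

variable (D : HeisAlg H B L)

lemma te_C_comm (i : Fin 2) (x : L) (w : W) :
    TE (D.C i) (TE x w) = TE x (TE (D.C i) w) := by
  rw [te_comm, D.C_central, te_zero, add_zero]

lemma te_E0 (h' : H) (m : Fin 2 → ℤ) (h₂ : H) (w : W) :
    TE (D.E 0 h') (TE (D.E m h₂) w) = TE (D.E m h₂) (TE (D.E 0 h') w) := by
  have hz : ⁅D.E 0 h', D.E m h₂⁆ = 0 := by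
    rw [D.bracket_EE]
    split <;> simp
  rw [te_comm, hz, te_zero, add_zero]

lemma te_d (i : Fin 2) (m : Fin 2 → ℤ) (h₂ : H) (w : W) :
    TE (D.d i) (TE (D.E m h₂) w)
      = TE (D.E m h₂) (TE (D.d i) w) + (m i : ℂ) • TE (D.E m h₂) w := by
  rw [te_comm, D.bracket_dE, te_smulL]

lemma te_EE (s t : Fin 2 → ℤ) (hst : s + t ≠ 0) (h₁ h₂ : H) (w : W) :
    TE (D.E s h₁) (TE (D.E t h₂) w) = TE (D.E t h₂) (TE (D.E s h₁) w) := by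
  rw [te_comm, D.bracket_EE, if_neg hst, te_zero, add_zero]

/-- The "γ" linear functional recording the central charges. -/
def ga (χ : L → ℂ) (s : Fin 2 → ℤ) : ℂ := (s 0 : ℂ) * χ (D.C 0) + (s 1 : ℂ) * χ (D.C 1)

lemma ga_neg (χ : L → ℂ) (s : Fin 2 → ℤ) : ga D χ (-s) = -ga D χ s := by
  simp [ga]; ring

lemma ga_add (χ : L → ℂ) (s t : Fin 2 → ℤ) : ga D χ (s + t) = ga D χ s + ga D χ t := by
  simp [ga]; ring

variable {h : H}

lemma te_pair (hh : B h h = 1) {χ : L → ℂ} {w : W}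
    (hC : ∀ i, TE (D.C i) w = χ (D.C i) • w) (s : Fin 2 → ℤ) :
    TE (D.E s h) (TE (D.E (-s) h) w)
      = TE (D.E (-s) h) (TE (D.E s h) w) + ga D χ s • w := by
  rw [te_comm]
  congr 1
  rw [D.bracket_EE s (-s) h h, if_pos (by simp), Fin.sum_univ_two, te_addL,
    te_smulL, te_smulL, hC 0, hC 1, hh, one_mul, one_mul, smul_smul, smul_smul]
  rw [ga, ← add_smul]

/-- The key predicate: `w` is a simultaneous eigenvector for all the quadratic
operators, the Cartan acts appropriately with `d`-shift `(δ0, δ1)`. -/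
def Gd (χ : L → ℂ) (h : H) (w : W) (b : (Fin 2 → ℤ) → ℂ) (δ0 δ1 : ℂ) : Prop :=
  (∀ s : Fin 2 → ℤ, TE (D.E s h) (TE (D.E (-s) h) w) = b s • w) ∧
  (∀ i, TE (D.C i) w = χ (D.C i) • w) ∧
  (∀ h' : H, TE (D.E 0 h') w = χ (D.E 0 h') • w) ∧
  (TE (D.d 0) w = (χ (D.d 0) + δ0) • w) ∧ (TE (D.d 1) w = (χ (D.d 1) + δ1) • w)

lemma Gd.move {χ : L → ℂ} {w : W} {b : (Fin 2 → ℤ) → ℂ} {δ0 δ1 : ℂ}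
    (hh : B h h = 1) (hw : Gd D χ h w b δ0 δ1) (m : Fin 2 → ℤ) :
    Gd D χ h (TE (D.E m h) w)
      (fun s => b s - (if s = m then ga D χ s else 0) + (if s = -m then ga D χ s else 0))
      (δ0 + (m 0 : ℂ)) (δ1 + (m 1 : ℂ)) := by
  obtain ⟨hE, hC, hE0, hd0, hd1⟩ := hw
  have hCm : ∀ i, TE (D.C i) (TE (D.E m h) w) = χ (D.C i) • TE (D.E m h) w := by
    intro i
    rw [te_C_comm, hC i, map_smul]
  refine ⟨?_, hCm, ?_, ?_, ?_⟩
  · intro s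
    beta_reduce
    by_cases h1 : s = m
    · by_cases h2 : s = -m
      · -- s = m = -m, hence m = 0
        have hm0 : m = 0 := by
          have hmm : m = -m := h1.symm.trans h2
          funext i
          have h3 := congrFun hmm i
          simp only [Pi.neg_apply] at h3
          simp only [Pi.zero_apply]
          omega
        subst hm0
        subst h1
        simp only [neg_zero, if_pos rfl]
        rw [show TE (D.E 0 h) (TE (D.E 0 h) w) = b 0 • w from by
          have h4 := hE 0; rwa [neg_zero] at h4, map_smul]
        congr 1
        ring
      · -- s = m, s ≠ -m
        subst h1
        have key : TE (D.E (-s) h) (TE (D.E s h) w) = (b s - ga D χ s) • w := by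
          have h3 := te_pair D hh hC s
          rw [hE s] at h3
          rw [sub_smul]
          exact eq_sub_iff_add_eq.mpr h3.symm
        rw [key, map_smul, if_pos rfl, if_neg h2]
        congr 1
        ring
    · by_cases h2 : s = -m
      · -- m = -s
        have hm : m = -s := by rw [h2]; simp
        subst hm
        have key := te_pair D hh hCm s
        rw [hE s, map_smul] at key
        rw [key, if_neg h1]
        rw [if_pos (by simp : s = - -s), ← add_smul]
        congr 1
        ring
      · -- generic case: everything commutes
        have hswap1 : TE (D.E (-s) h) (TE (D.E m h) w)
            = TE (D.E m h) (TE (D.E (-s) h) w) := by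
          apply te_EE
          intro hcon
          apply h1
          funext i
          have h3 := congrFun hcon i
          simp only [Pi.add_apply, Pi.neg_apply, Pi.zero_apply] at h3
          omega
        have hswap2 : TE (D.E s h) (TE (D.E m h) (TE (D.E (-s) h) w))
            = TE (D.E m h) (TE (D.E s h) (TE (D.E (-s) h) w)) := by
          apply te_EE
          intro hcon
          apply h2
          funext i
          have h3 := congrFun hcon i
          simp only [Pi.add_apply, Pi.neg_apply, Pi.zero_apply] at h3
          simp only [Pi.neg_apply]
          omega
        rw [hswap1, hswap2, hE s, map_smul, if_neg h1, if_neg h2]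
        congr 1
        ring
  · intro h'
    rw [te_E0, hE0, map_smul]
  · rw [te_d, hd0, map_smul, ← add_smul]
    congr 1
    ring
  · rw [te_d, hd1, map_smul, ← add_smul]
    congr 1
    ring

lemma Gd.recover {χ : L → ℂ} {w : W} {b : (Fin 2 → ℤ) → ℂ} {δ0 δ1 : ℂ}
    (hh : B h h = 1) (hw : Gd D χ h w b δ0 δ1) (m : Fin 2 → ℤ) :
    TE (D.E (-m) h) (TE (D.E m h) w) = (b m - ga D χ m) • w := by
  obtain ⟨hE, hC, _, _, _⟩ := hw
  have := te_pair D hh hC (-m)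
  rw [neg_neg, hE m, ga_neg] at this
  rw [this, sub_smul, neg_smul]
  abel

lemma Gd.b_neg {χ : L → ℂ} {w : W} {b : (Fin 2 → ℤ) → ℂ} {δ0 δ1 : ℂ}
    (hh : B h h = 1) (hw : Gd D χ h w b δ0 δ1) (hne : w ≠ 0) (m : Fin 2 → ℤ) :
    b (-m) = b m - ga D χ m := by
  have h1 := hw.recover D hh m
  have h2 := hw.1 (-m)
  rw [neg_neg] at h2
  rw [h1] at h2
  exact smul_left_injective ℂ hne h2.symm

lemma Gd.coverage {χ : L → ℂ} {w : W} {b : (Fin 2 → ℤ) → ℂ} {δ0 δ1 : ℂ}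
    (hh : B h h = 1) (hw : Gd D χ h w b δ0 δ1) (hne : w ≠ 0) (m : Fin 2 → ℤ)
    (hγ : ga D χ m ≠ 0) : b m ≠ ga D χ m ∨ b (-m) ≠ ga D χ (-m) := by
  by_contra hcon
  push_neg at hcon
  obtain ⟨h1, h2⟩ := hcon
  rw [hw.b_neg D hh hne m, ga_neg, h1] at h2
  apply hγ
  linear_combination h2

lemma Gd.pair_ne_zero {χ : L → ℂ} {u : W} {b : (Fin 2 → ℤ) → ℂ} {δ0 δ1 : ℂ}
    (hh : B h h = 1) (hu : Gd D χ h u b δ0 δ1) (hne : u ≠ 0) (p q : Fin 2 → ℤ)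
    (hqp : q ≠ p) (hqnp : q ≠ -p) (hbp : b p ≠ ga D χ p) (hbq : b q ≠ ga D χ q) :
    TE (D.E p h) (TE (D.E q h) u) ≠ 0 := by
  intro hzero
  have h1 := (hu.move D hh q).recover D hh p
  rw [hzero, map_zero] at h1
  beta_reduce at h1
  rw [if_neg (fun hc : p = q => hqp hc.symm),
    if_neg (fun hc : p = -q => hqnp (by rw [hc]; simp)), sub_zero, add_zero] at h1
  have h1' : (b p - ga D χ p) • TE (D.E q h) u = 0 := h1.symm
  have h2 : (b p - ga D χ p) • ((b q - ga D χ q) • u) = 0 := by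
    have h5 := congrArg (fun z => TE (D.E (-q) h) z) h1'
    simpa only [map_smul, map_zero, hu.recover D hh q] using h5
  rw [smul_smul] at h2
  rcases smul_eq_zero.mp h2 with hc | hc
  · rcases mul_eq_zero.mp hc with hc2 | hc2
    · exact hbp (sub_eq_zero.mp hc2)
    · exact hbq (sub_eq_zero.mp hc2)
  · exact hne hc

end Machine

end S9

namespace S9

section Machine2

variable {H : Type*} [AddCommGroup H] [Module ℂ H]
  {B : H →ₗ[ℂ] H →ₗ[ℂ] ℂ} {L : Type*} [LieRing L] [LieAlgebra ℂ L]
  {W : Type*} [AddCommGroup W] [Module ℂ W] [LieRingModule L W] [LieModule ℂ L W]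

local notation "TE" => LieModule.toEnd ℂ L W

variable (D : HeisAlg H B L)

lemma sum_ne_of_ne {s t : Fin 2 → ℤ} (hst : s ≠ -t) : s + t ≠ 0 := by
  intro hc
  apply hst
  funext i
  have h3 := congrFun hc i
  simp only [Pi.add_apply, Pi.zero_apply] at h3
  simp only [Pi.neg_apply]
  omega

lemma mem_wtSp_iff {χ : L → ℂ} {v : W} :
    v ∈ D.wtSp W χ ↔ ∀ x ∈ D.cartanSet, TE x v = χ x • v := by
  simp only [HeisAlg.wtSp, Submodule.mem_iInf, Module.End.mem_eigenspace_iff]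

lemma pairOp_mem_wtSp {χ : L → ℂ} {v : W} (hv : v ∈ D.wtSp W χ) (s : Fin 2 → ℤ) (h : H) :
    TE (D.E s h) (TE (D.E (-s) h) v) ∈ D.wtSp W χ := by
  rw [mem_wtSp_iff] at hv ⊢
  intro x hx
  rcases hx with (⟨h', rfl⟩ | ⟨i, rfl⟩) | ⟨i, rfl⟩
  · have hv0 : TE (D.E 0 h') v = χ (D.E 0 h') • v :=
      hv _ (Set.mem_union_left _ (Set.mem_union_left _ ⟨h', rfl⟩))
    rw [te_E0, te_E0, hv0, map_smul, map_smul]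
  · have hv0 : TE (D.C i) v = χ (D.C i) • v :=
      hv _ (Set.mem_union_left _ (Set.mem_union_right _ ⟨i, rfl⟩))
    rw [te_C_comm, te_C_comm, hv0, map_smul, map_smul]
  · have hv0 : TE (D.d i) v = χ (D.d i) • v :=
      hv _ (Set.mem_union_right _ ⟨i, rfl⟩)
    rw [te_d, te_d, hv0]
    simp only [map_add, map_smul, Pi.neg_apply, Int.cast_neg]
    module

lemma te_k_comm (s : Fin 2 → ℤ) (h : H) (x : L) (w : W) :
    TE ⁅D.E s h, D.E (-s) h⁆ (TE x w) = TE x (TE ⁅D.E s h, D.E (-s) h⁆ w) := by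
  have hz : ⁅(⁅D.E s h, D.E (-s) h⁆ : L), x⁆ = 0 := by
    rw [D.bracket_EE s (-s) h h, if_pos (by simp), Fin.sum_univ_two, add_lie,
      smul_lie, smul_lie, D.C_central, D.C_central, smul_zero, smul_zero, add_zero]
  rw [te_comm _ x w, hz, te_zero, add_zero]

lemma pairOp_comm (s t : Fin 2 → ℤ) (h : H) (w : W) :
    TE (D.E s h) (TE (D.E (-s) h) (TE (D.E t h) (TE (D.E (-t) h) w)))
      = TE (D.E t h) (TE (D.E (-t) h) (TE (D.E s h) (TE (D.E (-s) h) w))) := by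
  by_cases h1 : t = s
  · subst h1; rfl
  · by_cases h2 : t = -s
    · subst h2
      rw [neg_neg]
      -- X_s X_{-s} and X_{-s} X_s differ by the central operator K
      have key : ∀ u : W, TE (D.E s h) (TE (D.E (-s) h) u)
          = TE (D.E (-s) h) (TE (D.E s h) u) + TE ⁅D.E s h, D.E (-s) h⁆ u := fun u =>
        te_comm _ _ u
      rw [key (TE (D.E (-s) h) (TE (D.E s h) w)), key w, map_add, map_add,
        te_k_comm, te_k_comm]
    · -- generic: swap everything
      have c1 : TE (D.E (-s) h) (TE (D.E t h) (TE (D.E (-t) h) w))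
          = TE (D.E t h) (TE (D.E (-s) h) (TE (D.E (-t) h) w)) :=
        te_EE D _ _ (sum_ne_of_ne (fun hc => h1 (neg_inj.mp hc).symm)) h h _
      have c2 : TE (D.E (-s) h) (TE (D.E (-t) h) w)
          = TE (D.E (-t) h) (TE (D.E (-s) h) w) :=
        te_EE D _ _ (sum_ne_of_ne (by intro hc; rw [neg_neg] at hc; exact h2 hc.symm)) h h _
      have c3 : TE (D.E s h) (TE (D.E t h) (TE (D.E (-t) h) (TE (D.E (-s) h) w)))
          = TE (D.E t h) (TE (D.E s h) (TE (D.E (-t) h) (TE (D.E (-s) h) w))) :=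
        te_EE D _ _ (sum_ne_of_ne (fun hc => h2 (by rw [hc, neg_neg]))) h h _
      have c4 : TE (D.E s h) (TE (D.E (-t) h) (TE (D.E (-s) h) w))
          = TE (D.E (-t) h) (TE (D.E s h) (TE (D.E (-s) h) w)) :=
        te_EE D _ _ (sum_ne_of_ne (by intro hc; rw [neg_neg] at hc; exact h1 hc.symm)) h h _
      rw [c1, c2, c3, c4]

lemma exists_mu (χ : L → ℂ) (h : H) (δ0 δ1 : ℂ) :
    ∃ μ : L → ℂ, ∀ (w : W) b, Gd D χ h w b δ0 δ1 → w ∈ D.wtSp W μ := by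
  classical
  refine ⟨fun x => if hx : ∃ c : ℂ, ∀ (w : W) b, Gd D χ h w b δ0 δ1 → TE x w = c • w
    then hx.choose else 0, ?_⟩
  intro w b hw
  rw [mem_wtSp_iff]
  intro x hx
  have hex : ∃ c : ℂ, ∀ (w : W) b, Gd D χ h w b δ0 δ1 → TE x w = c • w := by
    rcases hx with (⟨h', rfl⟩ | ⟨i, rfl⟩) | ⟨i, rfl⟩
    · exact ⟨χ (D.E 0 h'), fun w b hw => hw.2.2.1 h'⟩
    · exact ⟨χ (D.C i), fun w b hw => hw.2.1 i⟩
    · fin_cases i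
      · exact ⟨χ (D.d 0) + δ0, fun w b hw => hw.2.2.2.1⟩
      · exact ⟨χ (D.d 1) + δ1, fun w b hw => hw.2.2.2.2⟩
  rw [dif_pos hex]
  exact hex.choose_spec w b hw

lemma infinite_family_contra {S : Set ℤ} (hS : S.Infinite)
    {μ : L → ℂ} (hfdμ : FiniteDimensional ℂ (D.wtSp W μ))
    (vv : ℤ → W) (hmem : ∀ n ∈ S, vv n ∈ D.wtSp W μ) (hnz : ∀ n ∈ S, vv n ≠ 0)
    (lam : ℤ → (Fin 2 → ℤ) → ℂ) (h : H)
    (heig : ∀ n ∈ S, ∀ s, TE (D.E s h) (TE (D.E (-s) h) (vv n)) = lam n s • vv n)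
    (hsep : ∀ n ∈ S, ∀ n' ∈ S, n ≠ n' → ∃ s, lam n s ≠ lam n' s) : False := by
  classical
  haveI hinf : Infinite S := Set.infinite_coe_iff.mpr hS
  have hLI : LinearIndependent ℂ (fun n : S => vv n) := by
    apply eigen_linearIndependent
      (fun s : Fin 2 → ℤ => (TE (D.E s h)) * (TE (D.E (-s) h)))
      (fun n : S => vv n) (fun n : S => lam n)
    · exact fun n => hnz n n.2
    · intro n s
      simpa only [Module.End.mul_apply] using heig n n.2 s
    · intro n n' hne
      exact hsep n n.2 n' n'.2 (fun hc => hne (Subtype.ext hc))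
  have hLI2 : LinearIndependent ℂ (fun n : S => (⟨vv n, hmem n n.2⟩ : D.wtSp W μ)) := by
    apply LinearIndependent.of_comp (D.wtSp W μ).subtype
    convert hLI
    rfl
  haveI : Module.Finite ℂ (D.wtSp W μ) := hfdμ
  haveI := hLI2.finite
  exact not_finite S

end Machine2

end S9

namespace S9

section Big

variable {H : Type*} [AddCommGroup H] [Module ℂ H]
  {B : H →ₗ[ℂ] H →ₗ[ℂ] ℂ} {L : Type*} [LieRing L] [LieAlgebra ℂ L]
  {W : Type*} [AddCommGroup W] [Module ℂ W] [LieRingModule L W] [LieModule ℂ L W]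

local notation "TE" => LieModule.toEnd ℂ L W

variable (D : HeisAlg H B L)

lemma Gd_cast {χ : L → ℂ} {h : H} {w : W} {b} {δ0 δ1 δ0' δ1' : ℂ}
    (hw : Gd D χ h w b δ0 δ1) (h0 : δ0 = δ0') (h1 : δ1 = δ1') :
    Gd D χ h w b δ0' δ1' := h0 ▸ h1 ▸ hw

/-- Abstract two-step family contradiction: an infinite family of nonzero
double-moved vectors all landing in one weight space. -/
lemma family_contra (hfd : ∀ χ : L → ℂ, FiniteDimensional ℂ (D.wtSp W χ))
    {χ : L → ℂ} {h : H} (hh : B h h = 1) {u : W} {b : (Fin 2 → ℤ) → ℂ}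
    (hGd : Gd D χ h u b 0 0) (hune : u ≠ 0)
    {S : Set ℤ} (hS : S.Infinite) (p q : ℤ → (Fin 2 → ℤ))
    (hbp : ∀ n ∈ S, b (p n) ≠ ga D χ (p n)) (hbq : ∀ n ∈ S, b (q n) ≠ ga D χ (q n))
    (hqp : ∀ n ∈ S, q n ≠ p n) (hqnp : ∀ n ∈ S, q n ≠ -(p n))
    (Δ0 Δ1 : ℂ)
    (hΔ0 : ∀ n ∈ S, ((q n) 0 : ℂ) + ((p n) 0 : ℂ) = Δ0)
    (hΔ1 : ∀ n ∈ S, ((q n) 1 : ℂ) + ((p n) 1 : ℂ) = Δ1)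
    (hdist : ∀ n ∈ S, ∀ n' ∈ S, n ≠ n' →
      (ga D χ (p n) ≠ 0 ∧ p n ≠ -(p n) ∧
        p n ≠ q n' ∧ p n ≠ -(q n') ∧ p n ≠ p n' ∧ p n ≠ -(p n')) ∨
      (ga D χ (q n) ≠ 0 ∧ q n ≠ -(q n) ∧
        q n ≠ q n' ∧ q n ≠ -(q n') ∧ q n ≠ p n' ∧ q n ≠ -(p n'))) : False := by
  classical
  obtain ⟨μ, hμ⟩ := exists_mu (W := W) D χ h Δ0 Δ1
  set lam : ℤ → (Fin 2 → ℤ) → ℂ := fun n s =>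
    (b s - (if s = q n then ga D χ s else 0) + (if s = -(q n) then ga D χ s else 0))
      - (if s = p n then ga D χ s else 0) + (if s = -(p n) then ga D χ s else 0) with hlam
  have hGdn : ∀ n ∈ S, Gd D χ h (TE (D.E (p n) h) (TE (D.E (q n) h) u)) (lam n) Δ0 Δ1 := by
    intro n hn
    have h1 := (hGd.move D hh (q n)).move D hh (p n)
    refine Gd_cast D (Gd_cast D h1 ?_ ?_) rfl rfl
    · rw [← hΔ0 n hn]; ring
    · rw [← hΔ1 n hn]; ring
  have hnz : ∀ n ∈ S, TE (D.E (p n) h) (TE (D.E (q n) h) u) ≠ 0 := fun n hn =>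
    hGd.pair_ne_zero D hh hune (p n) (q n) (hqp n hn) (hqnp n hn) (hbp n hn) (hbq n hn)
  -- separation of eigenvalue tuples
  have hsep : ∀ n ∈ S, ∀ n' ∈ S, n ≠ n' → ∃ s, lam n s ≠ lam n' s := by
    intro n hn n' hn' hne
    rcases hdist n hn n' hn' hne with ⟨hg, hd1, hd2, hd3, hd4, hd5⟩ | ⟨hg, hd1, hd2, hd3, hd4, hd5⟩
    · refine ⟨p n, ?_⟩
      have e1 : lam n (p n) = b (p n) - ga D χ (p n) := by
        rw [hlam]
        beta_reduce
        rw [if_neg (fun hc : p n = q n => (hqp n hn) hc.symm),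
          if_neg (fun hc : p n = -(q n) => (hqnp n hn) (by rw [hc]; simp)),
          if_pos rfl, if_neg hd1]
        ring
      have e2 : lam n' (p n) = b (p n) := by
        rw [hlam]
        beta_reduce
        rw [if_neg hd2, if_neg hd3, if_neg hd4, if_neg hd5]
        ring
      rw [e1, e2]
      intro hc
      exact hg (by linear_combination -hc)
    · refine ⟨q n, ?_⟩
      have e1 : lam n (q n) = b (q n) - ga D χ (q n) := by
        rw [hlam]
        beta_reduce
        rw [if_pos rfl, if_neg hd1, if_neg (hqp n hn), if_neg (hqnp n hn)]
        ring
      have e2 : lam n' (q n) = b (q n) := by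
        rw [hlam]
        beta_reduce
        rw [if_neg hd2, if_neg hd3, if_neg hd4, if_neg hd5]
        ring
      rw [e1, e2]
      intro hc
      exact hg (by linear_combination -hc)
  exact infinite_family_contra D hS (hfd μ) _
    (fun n hn => hμ _ _ (hGdn n hn)) hnz lam h
    (fun n hn s => by
      have h5 := (hGdn n hn).1 s
      exact h5) hsep

end Big

end S9

namespace S9

section Big2

variable {H : Type*} [AddCommGroup H] [Module ℂ H]
  {B : H →ₗ[ℂ] H →ₗ[ℂ] ℂ} {L : Type*} [LieRing L] [LieAlgebra ℂ L]
  {W : Type*} [AddCommGroup W] [Module ℂ W] [LieRingModule L W] [LieModule ℂ L W]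

local notation "TE" => LieModule.toEnd ℂ L W

variable (D : HeisAlg H B L)

lemma negform (av bv : Fin 2 → ℤ) (x n : ℤ) :
    -(x • av + n • bv) = (-x) • av + (-n) • bv := by
  rw [neg_add, neg_zsmul, neg_zsmul]

lemma fullrow (hfd : ∀ χ : L → ℂ, FiniteDimensional ℂ (D.wtSp W χ))
    {χ : L → ℂ} {h : H} (hh : B h h = 1) {u : W} {b : (Fin 2 → ℤ) → ℂ}
    (hGd : Gd D χ h u b 0 0) (hune : u ≠ 0) (av bv : Fin 2 → ℤ)
    (hind : ∀ x n x' n' : ℤ, x • av + n • bv = x' • av + n' • bv → x = x' ∧ n = n')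
    (n' : ℤ) (hn' : n' ≠ 0) (x₀ : ℤ)
    (hfull : ∀ x : ℤ, x ≠ x₀ → b (x • av + n' • bv) ≠ ga D χ (x • av + n' • bv))
    (hga : ∀ x : ℤ, x ≠ x₀ → ga D χ (x • av + n' • bv) ≠ 0) : False := by
  have hindne : ∀ (x n x' n'' : ℤ), (x ≠ x' ∨ n ≠ n'') →
      x • av + n • bv ≠ x' • av + n'' • bv := by
    intro x n x' n'' hor hc
    obtain ⟨e1, e2⟩ := hind _ _ _ _ hc
    rcases hor with ho | ho
    · exact ho e1
    · exact ho e2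
  set T := 2 * x₀ + 1 with hT
  refine family_contra D hfd hh hGd hune (S := Set.Iio x₀) (Set.Iio_infinite x₀)
    (fun x => x • av + n' • bv) (fun x => (T - x) • av + n' • bv)
    (fun x hx => hfull x (by have := Set.mem_Iio.mp hx; omega))
    (fun x hx => hfull (T - x) (by have := Set.mem_Iio.mp hx; omega))
    (fun x hx => hindne _ _ _ _ (Or.inl (by have := Set.mem_Iio.mp hx; omega)))
    (fun x hx => by
      rw [negform]
      exact hindne _ _ _ _ (Or.inr (by omega)))
    (((T • av + (2 * n') • bv) 0 : ℤ) : ℂ) (((T • av + (2 * n') • bv) 1 : ℤ) : ℂ)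
    (fun x hx => by
      simp only [Pi.add_apply, Pi.smul_apply, smul_eq_mul]
      push_cast
      ring)
    (fun x hx => by
      simp only [Pi.add_apply, Pi.smul_apply, smul_eq_mul]
      push_cast
      ring)
    ?_
  intro x hx x' hx' hne
  have hxlt := Set.mem_Iio.mp hx
  have hxlt' := Set.mem_Iio.mp hx'
  left
  refine ⟨hga x (by omega), ?_, ?_, ?_, ?_, ?_⟩
  · rw [negform]; exact hindne _ _ _ _ (Or.inr (by omega))
  · exact hindne _ _ _ _ (Or.inl (by omega))
  · rw [negform]; exact hindne _ _ _ _ (Or.inr (by omega))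
  · exact hindne _ _ _ _ (Or.inl (by omega))
  · rw [negform]; exact hindne _ _ _ _ (Or.inr (by omega))

lemma core (hfd : ∀ χ : L → ℂ, FiniteDimensional ℂ (D.wtSp W χ))
    {χ : L → ℂ} {h : H} (hh : B h h = 1) {u : W} {b : (Fin 2 → ℤ) → ℂ}
    (hGd : Gd D χ h u b 0 0) (hune : u ≠ 0) (av bv : Fin 2 → ℤ)
    (hind : ∀ x n x' n' : ℤ, x • av + n • bv = x' • av + n' • bv → x = x' ∧ n = n')
    (hgaa : ga D χ av ≠ 0) : False := by
  classical
  have hindne : ∀ (x n x' n'' : ℤ), (x ≠ x' ∨ n ≠ n'') →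
      x • av + n • bv ≠ x' • av + n'' • bv := by
    intro x n x' n'' hor hc
    obtain ⟨e1, e2⟩ := hind _ _ _ _ hc
    rcases hor with ho | ho
    · exact ho e1
    · exact ho e2
  have galin : ∀ x n : ℤ, ga D χ (x • av + n • bv)
      = (x : ℂ) * ga D χ av + (n : ℂ) * ga D χ bv := by
    intro x n
    simp only [ga, Pi.add_apply, Pi.smul_apply, smul_eq_mul]
    push_cast
    ring
  have hexc : ∀ n : ℤ, ∃ x₀ : ℤ, ∀ x, ga D χ (x • av + n • bv) = 0 → x = x₀ := by
    intro n
    by_cases hx : ∃ x : ℤ, ga D χ (x • av + n • bv) = 0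
    · obtain ⟨x₀, h0⟩ := hx
      refine ⟨x₀, fun x hx' => ?_⟩
      rw [galin] at hx' h0
      have hsub : ((x : ℂ) - (x₀ : ℂ)) * ga D χ av = 0 := by linear_combination hx' - h0
      rcases mul_eq_zero.mp hsub with hc | hc
      · exact_mod_cast sub_eq_zero.mp hc
      · exact absurd hc hgaa
    · push_neg at hx
      exact ⟨0, fun x hx' => absurd hx' (hx x)⟩
  have key : ∀ n : ℤ, 1 ≤ n → ∃ x y : ℤ,
      b (x • av + n • bv) ≠ ga D χ (x • av + n • bv) ∧
      b (y • av + (-n) • bv) ≠ ga D χ (y • av + (-n) • bv) ∧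
      (x + y = 1 ∨ x + y = 2 ∨ x + y = -1 ∨ x + y = -2) := by
    intro n hn
    obtain ⟨x₀, hx₀⟩ := hexc n
    have hcov : ∀ x : ℤ, x ≠ x₀ →
        x ∈ {x : ℤ | b (x • av + n • bv) ≠ ga D χ (x • av + n • bv)} ∨
        -x ∈ {y : ℤ | b (y • av + (-n) • bv) ≠ ga D χ (y • av + (-n) • bv)} := by
      intro x hx
      have hγ : ga D χ (x • av + n • bv) ≠ 0 := fun hcc => hx (hx₀ x hcc)
      rcases hGd.coverage D hh hune _ hγ with hcc | hcc
      · exact Or.inl hcc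
      · right
        rw [negform] at hcc
        exact hcc
    rcases spread_lemma _ _ x₀ hcov with ⟨x, y, hxp, hyq, hσ⟩ | hP | hQ
    · exact ⟨x, y, hxp, hyq, hσ⟩
    · exact absurd (fullrow D hfd hh hGd hune av bv hind n (by omega) x₀ hP
        (fun x hx => fun hcc => hx (hx₀ x hcc))) (fun hcc => hcc)
    · exfalso
      have hx₀' : ∀ y, ga D χ (y • av + (-n) • bv) = 0 → y = -x₀ := by
        intro y hy
        have h2 : ga D χ ((-y) • av + n • bv) = 0 := by
          rw [galin] at hy ⊢
          push_cast at hy ⊢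
          linear_combination -hy
        have := hx₀ _ h2
        omega
      exact fullrow D hfd hh hGd hune av bv hind (-n) (by omega) (-x₀) hQ
        (fun y hy => fun hcc => hy (hx₀' y hcc))
  have key' : ∀ n : ℤ, ∃ x y : ℤ, 1 ≤ n →
      (b (x • av + n • bv) ≠ ga D χ (x • av + n • bv) ∧
       b (y • av + (-n) • bv) ≠ ga D χ (y • av + (-n) • bv) ∧
       (x + y = 1 ∨ x + y = 2 ∨ x + y = -1 ∨ x + y = -2)) := by
    intro n
    by_cases hn : 1 ≤ n
    · obtain ⟨x, y, h1, h2, h3⟩ := key n hn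
      exact ⟨x, y, fun _ => ⟨h1, h2, h3⟩⟩
    · exact ⟨0, 0, fun hcc => absurd hcc hn⟩
  choose xf yf hkey using key'
  obtain ⟨σ, hσne, hσinf⟩ := pigeon4 (fun n => xf n + yf n)
    (fun n hn => (hkey n hn).2.2)
  refine family_contra D hfd hh hGd hune hσinf
    (fun n => xf n • av + n • bv) (fun n => yf n • av + (-n) • bv)
    (fun n hn => (hkey n hn.1).1)
    (fun n hn => (hkey n hn.1).2.1)
    (fun n hn => hindne _ _ _ _ (Or.inr (by have := hn.1; omega)))
    (fun n hn => by
      rw [negform]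
      refine hindne _ _ _ _ (Or.inl ?_)
      intro hcc
      apply hσne
      have h2 : xf n + yf n = σ := hn.2
      omega)
    ((σ : ℂ) * ((av 0 : ℤ) : ℂ)) ((σ : ℂ) * ((av 1 : ℤ) : ℂ))
    (fun n hn => by
      have h2 : xf n + yf n = σ := hn.2
      simp only [Pi.add_apply, Pi.smul_apply, smul_eq_mul]
      push_cast
      have h3 : (xf n : ℂ) + (yf n : ℂ) = σ := by exact_mod_cast h2
      linear_combination ((av 0 : ℤ) : ℂ) * h3)
    (fun n hn => by
      have h2 : xf n + yf n = σ := hn.2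
      simp only [Pi.add_apply, Pi.smul_apply, smul_eq_mul]
      push_cast
      have h3 : (xf n : ℂ) + (yf n : ℂ) = σ := by exact_mod_cast h2
      linear_combination ((av 1 : ℤ) : ℂ) * h3)
    ?_
  intro n hn n'' hn'' hne
  have h1n : 1 ≤ n := hn.1
  have h1n2 : 1 ≤ n'' := hn''.1
  by_cases hgp : ga D χ (xf n • av + n • bv) = 0
  · right
    have hgq : ga D χ (yf n • av + (-n) • bv) ≠ 0 := by
      rw [galin] at hgp ⊢
      intro hcc
      have h2 : xf n + yf n = σ := hn.2
      have h3 : (xf n : ℂ) + (yf n : ℂ) = σ := by exact_mod_cast h2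
      have h4 : (σ : ℂ) * ga D χ av = 0 := by
        push_cast at hcc hgp ⊢
        linear_combination hgp + hcc - ga D χ av * h3
      rcases mul_eq_zero.mp h4 with hc5 | hc5
      · exact hσne (by exact_mod_cast hc5)
      · exact hgaa hc5
    refine ⟨hgq, ?_, ?_, ?_, ?_, ?_⟩
    · rw [negform]; exact hindne _ _ _ _ (Or.inr (by omega))
    · exact hindne _ _ _ _ (Or.inr (by omega))
    · rw [negform]; exact hindne _ _ _ _ (Or.inr (by omega))
    · exact hindne _ _ _ _ (Or.inr (by omega))
    · rw [negform]; exact hindne _ _ _ _ (Or.inr (by omega))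
  · left
    refine ⟨hgp, ?_, ?_, ?_, ?_, ?_⟩
    · rw [negform]; exact hindne _ _ _ _ (Or.inr (by omega))
    · exact hindne _ _ _ _ (Or.inr (by omega))
    · rw [negform]; exact hindne _ _ _ _ (Or.inr (by omega))
    · exact hindne _ _ _ _ (Or.inr (by omega))
    · rw [negform]; exact hindne _ _ _ _ (Or.inr (by omega))

end Big2

end S9

namespace S9

section Big3

variable {H : Type*} [AddCommGroup H] [Module ℂ H]
  {B : H →ₗ[ℂ] H →ₗ[ℂ] ℂ} {L : Type*} [LieRing L] [LieAlgebra ℂ L]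
  {W : Type*} [AddCommGroup W] [Module ℂ W] [LieRingModule L W] [LieModule ℂ L W]

local notation "TE" => LieModule.toEnd ℂ L W

variable (D : HeisAlg H B L)

lemma E0_mem_cartan (h' : H) : D.E 0 h' ∈ D.cartanSet :=
  Set.mem_union_left _ (Set.mem_union_left _ ⟨h', rfl⟩)

lemma C_mem_cartan (i : Fin 2) : D.C i ∈ D.cartanSet :=
  Set.mem_union_left _ (Set.mem_union_right _ ⟨i, rfl⟩)

lemma d_mem_cartan (i : Fin 2) : D.d i ∈ D.cartanSet :=
  Set.mem_union_right _ ⟨i, rfl⟩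

lemma big (hfd : ∀ χ : L → ℂ, FiniteDimensional ℂ (D.wtSp W χ))
    {χ : L → ℂ} (h : H) (hh : B h h = 1)
    {v₀ : W} (hv₀ : v₀ ∈ D.wtSp W χ) (hvne : v₀ ≠ 0)
    (hCne : ¬(χ (D.C 0) = 0 ∧ χ (D.C 1) = 0)) : False := by
  classical
  haveI := hfd χ
  haveI : Nontrivial (D.wtSp W χ) :=
    ⟨⟨v₀, hv₀⟩, 0, fun hc => hvne (by simpa using congrArg Subtype.val hc)⟩
  have hmaps : ∀ s : Fin 2 → ℤ, ∀ x : W, x ∈ D.wtSp W χ →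
      ((TE (D.E s h)) * (TE (D.E (-s) h))) x ∈ D.wtSp W χ := fun s x hx => by
    simpa only [Module.End.mul_apply] using pairOp_mem_wtSp D hx s h
  obtain ⟨v, hvne', hv⟩ := common_eigenvector
    (fun s : Fin 2 → ℤ =>
      LinearMap.restrict ((TE (D.E s h)) * (TE (D.E (-s) h))) (hmaps s))
    (by
      intro s t x
      apply Subtype.ext
      simp only [LinearMap.restrict_apply, Module.End.mul_apply]
      exact pairOp_comm D s t h (x : W))
  have humem : (v : W) ∈ D.wtSp W χ := v.2
  have hune : (v : W) ≠ 0 := fun hc => hvne' (Subtype.ext hc)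
  have hb : ∀ s : Fin 2 → ℤ, ∃ c : ℂ,
      TE (D.E s h) (TE (D.E (-s) h) (v : W)) = c • (v : W) := by
    intro s
    obtain ⟨c, hc⟩ := hv s
    refine ⟨c, ?_⟩
    have h2 := congrArg Subtype.val hc
    simpa only [LinearMap.restrict_apply, Module.End.mul_apply,
      Submodule.coe_smul] using h2
  choose bb hbb using hb
  have hGd : Gd D χ h (v : W) bb 0 0 := by
    rw [mem_wtSp_iff] at humem
    refine ⟨hbb, fun i => humem _ (C_mem_cartan D i),
      fun h' => humem _ (E0_mem_cartan D h'), ?_, ?_⟩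
    · rw [humem _ (d_mem_cartan D 0), add_zero]
    · rw [humem _ (d_mem_cartan D 1), add_zero]
  have humem2 : (v : W) ∈ D.wtSp W χ := v.2
  rcases not_and_or.mp hCne with hc | hc
  · refine core D hfd hh hGd hune (Pi.single 0 1) (Pi.single 1 1) ?_ ?_
    · intro x n x' n' hcc
      have h0 := congrFun hcc 0
      have h1 := congrFun hcc 1
      simp [Pi.single_apply] at h0 h1
      exact ⟨h0, h1⟩
    · simpa [ga, Pi.single_apply] using hc
  · refine core D hfd hh hGd hune (Pi.single 1 1) (Pi.single 0 1) ?_ ?_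
    · intro x n x' n' hcc
      have h0 := congrFun hcc 0
      have h1 := congrFun hcc 1
      simp [Pi.single_apply] at h0 h1
      exact ⟨h1, h0⟩
    · simpa [ga, Pi.single_apply] using hc

/-- Under the standing hypotheses, the central elements act as zero on `W`. -/
lemma C_acts_zero (hwt : (⨆ χ : L → ℂ, D.wtSp W χ) = ⊤)
    (hfd : ∀ χ : L → ℂ, FiniteDimensional ℂ (D.wtSp W χ))
    (h : H) (hh : B h h = 1) (i : Fin 2) (w : W) : TE (D.C i) w = 0 := by
  have hker : ∀ χ : L → ℂ, D.wtSp W χ ≤ LinearMap.ker (TE (D.C i)) := by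
    intro χ v hv
    rw [LinearMap.mem_ker]
    have hv2 : TE (D.C i) v = χ (D.C i) • v :=
      (mem_wtSp_iff D).mp hv _ (C_mem_cartan D i)
    by_cases hvz : v = 0
    · rw [hvz, map_zero]
    · have hzero : χ (D.C i) = 0 := by
        by_contra hcc
        refine big D hfd h hh hv hvz ?_
        intro ⟨h0, h1⟩
        fin_cases i
        · exact hcc h0
        · exact hcc h1
      rw [hv2, hzero, zero_smul]
  have : w ∈ LinearMap.ker (TE (D.C i)) := by
    have hw : w ∈ (⨆ χ : L → ℂ, D.wtSp W χ) := hwt.symm ▸ Submodule.mem_top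
    exact (iSup_le hker : (⨆ χ : L → ℂ, D.wtSp W χ) ≤ _) hw
  exact LinearMap.mem_ker.mp this

/-- With vanishing central action, all `E`-operators commute. -/
lemma te_EE_comm_of_Czero (hC : ∀ (i : Fin 2) (w : W), TE (D.C i) w = 0)
    (s t : Fin 2 → ℤ) (h₁ h₂ : H) (w : W) :
    TE (D.E s h₁) (TE (D.E t h₂) w) = TE (D.E t h₂) (TE (D.E s h₁) w) := by
  rw [te_comm]
  have hz : TE ⁅D.E s h₁, D.E t h₂⁆ w = 0 := by
    rw [D.bracket_EE]
    split
    · rw [Fin.sum_univ_two, te_addL, te_smulL, te_smulL, hC 0, hC 1, smul_zero,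
        smul_zero, add_zero]
    · exact te_zero w
  rw [hz, add_zero]

end Big3

end S9


/-- For `h ∈ H` with `(h,h) = 1`, the operators
`e = (h t₁)(h t₁⁻¹)` and `f = (h t₂)(h t₂⁻¹)` preserve each weight space of a
weight module `W` with finite-dimensional weight spaces, and every monomial
`h₁ t₁^{a₁}t₂^{b₁} ⋯ h_n t₁^{a_n}t₂^{b_n} v` built from a common eigenvector `v`
of `e` and `f` is again a common eigenvector of `e` and `f`. -/
theorem eOp_fOp_preserve_weight_spaces_and_monomials_are_eigenvectors
    (hwt : (⨆ χ : L → ℂ, D.wtSp W χ) = ⊤)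
    (hfd : ∀ χ : L → ℂ, FiniteDimensional ℂ (D.wtSp W χ))
    (h : H) (hh : B h h = 1) :
    (∀ (χ : L → ℂ) (v : W), v ∈ D.wtSp W χ →
        D.eOp W h v ∈ D.wtSp W χ ∧ D.fOp W h v ∈ D.wtSp W χ) ∧
    (∀ (v : W) (a b : ℂ), D.eOp W h v = a • v → D.fOp W h v = b • v →
      ∀ l : List (H × (Fin 2 → ℤ)),
        ∃ a' b' : ℂ,
          D.eOp W h (l.foldr (fun p w => ⁅D.E p.2 p.1, w⁆) v)
              = a' • l.foldr (fun p w => ⁅D.E p.2 p.1, w⁆) v ∧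
          D.fOp W h (l.foldr (fun p w => ⁅D.E p.2 p.1, w⁆) v)
              = b' • l.foldr (fun p w => ⁅D.E p.2 p.1, w⁆) v) := by
  have heop : ∀ x : W, D.eOp W h x = LieModule.toEnd ℂ L W (D.E (Pi.single 0 1) h)
      (LieModule.toEnd ℂ L W (D.E (-Pi.single 0 1) h) x) := fun x => rfl
  have hfop : ∀ x : W, D.fOp W h x = LieModule.toEnd ℂ L W (D.E (Pi.single 1 1) h)
      (LieModule.toEnd ℂ L W (D.E (-Pi.single 1 1) h) x) := fun x => rfl
  constructor
  · intro χ v hv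
    constructor
    · rw [heop]
      exact S9.pairOp_mem_wtSp D hv (Pi.single 0 1) h
    · rw [hfop]
      exact S9.pairOp_mem_wtSp D hv (Pi.single 1 1) h
  · intro v a b hea heb l
    have hC : ∀ (i : Fin 2) (w : W), LieModule.toEnd ℂ L W (D.C i) w = 0 :=
      S9.C_acts_zero D hwt hfd h hh
    have hcomm := S9.te_EE_comm_of_Czero D hC
    have hfold : ∀ x : W, ∀ (p : H × (Fin 2 → ℤ)),
        (⁅D.E p.2 p.1, x⁆ : W) = LieModule.toEnd ℂ L W (D.E p.2 p.1) x :=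
      fun x p => rfl
    suffices hstrong : D.eOp W h (l.foldr (fun p w => ⁅D.E p.2 p.1, w⁆) v)
        = a • l.foldr (fun p w => ⁅D.E p.2 p.1, w⁆) v ∧
        D.fOp W h (l.foldr (fun p w => ⁅D.E p.2 p.1, w⁆) v)
        = b • l.foldr (fun p w => ⁅D.E p.2 p.1, w⁆) v by
      exact ⟨a, b, hstrong⟩
    induction l with
    | nil =>
      simpa using ⟨hea, heb⟩
    | cons p t ih =>
      obtain ⟨ihe, ihf⟩ := ih
      set u := t.foldr (fun p w => ⁅D.E p.2 p.1, w⁆) v with hu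
      have hfc : (p :: t).foldr (fun p w => ⁅D.E p.2 p.1, w⁆) v
          = LieModule.toEnd ℂ L W (D.E p.2 p.1) u := rfl
      rw [hfc]
      constructor
      · rw [heop, hcomm (-Pi.single 0 1) p.2 h p.1 u,
          hcomm (Pi.single 0 1) p.2 h p.1 (LieModule.toEnd ℂ L W (D.E (-Pi.single 0 1) h) u),
          ← heop, ihe, map_smul]
      · rw [hfop, hcomm (-Pi.single 1 1) p.2 h p.1 u,
          hcomm (Pi.single 1 1) p.2 h p.1 (LieModule.toEnd ℂ L W (D.E (-Pi.single 1 1) h) u),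
          ← hfop, ihf, map_smul]

end
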